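/- Let λ : G → ℤ/4ℤ be a surjective group homomorphism whose restriction to each finite cyclic subgroup ⟨b_j⟩, ⟨d_k⟩, ⟨e_l⟩, ⟨g_q⟩ is injective. Then there exist an admissible automorphism α of G and an integer k with 0 ≤ k ≤ m such that, writing λ' = λ∘α: λ'(a_i)=1 for all 1≤i≤r; λ'(b_j)=1 and λ'(c_j)=0 for all 1≤j≤s; λ'(d_k)=1 for all 1≤k≤t; λ'(e_l)=2 for all 1≤l≤m; λ'(f_i)=1 for all i≤k and λ'(f_i)=0 for all k<i≤m; and λ'(g_q)=2 for all 1≤q≤n. -/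

import Mathlib

open Monoid

/-- Index type for the factors of the free product `G(r,s,t,m,n)`. -/
abbrev Idx (r s t m n : ℕ) := Fin r ⊕ Fin s ⊕ Fin t ⊕ Fin m ⊕ Fin n

/-- The factors: `r` copies of `ℤ`, `s` copies of `ℤ/4 × ℤ`, `t` copies of `ℤ/4`,
`m` copies of `ℤ/2 × ℤ`, and `n` copies of `ℤ/2` (written multiplicatively). -/
def Fac (r s t m n : ℕ) : Idx r s t m n → Type
  | .inl _ => Multiplicative ℤ
  | .inr (.inl _) => Multiplicative (ZMod 4 × ℤ)
  | .inr (.inr (.inl _)) => Multiplicative (ZMod 4)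
  | .inr (.inr (.inr (.inl _))) => Multiplicative (ZMod 2 × ℤ)
  | .inr (.inr (.inr (.inr _))) => Multiplicative (ZMod 2)

instance (r s t m n : ℕ) : (i : Idx r s t m n) → Group (Fac r s t m n i)
  | .inl _ => inferInstanceAs (Group (Multiplicative ℤ))
  | .inr (.inl _) => inferInstanceAs (Group (Multiplicative (ZMod 4 × ℤ)))
  | .inr (.inr (.inl _)) => inferInstanceAs (Group (Multiplicative (ZMod 4)))
  | .inr (.inr (.inr (.inl _))) => inferInstanceAs (Group (Multiplicative (ZMod 2 × ℤ)))
  | .inr (.inr (.inr (.inr _))) => inferInstanceAs (Group (Multiplicative (ZMod 2)))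

/-- The group `G(r,s,t,m,n)`, the free product of the factors above; this is the orbifold
fundamental group `π₁^orb(V(Γ(v),G(v)))`. -/
abbrev OrbGroup (r s t m n : ℕ) := Monoid.CoprodI (Fac r s t m n)

variable {r s t m n : ℕ}

/-- The free generator `a_i` of the `i`-th `ℤ` factor. -/
def genA (i : Fin r) : OrbGroup r s t m n :=
  CoprodI.of (show Fac r s t m n (.inl i) from Multiplicative.ofAdd (1 : ℤ))

/-- The order-4 generator `b_j` of the `j`-th `ℤ/4 × ℤ` factor. -/
def genB (j : Fin s) : OrbGroup r s t m n :=
  CoprodI.of (show Fac r s t m n (.inr (.inl j)) from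
    Multiplicative.ofAdd ((1, 0) : ZMod 4 × ℤ))

/-- The infinite-order generator `c_j` of the `j`-th `ℤ/4 × ℤ` factor. -/
def genC (j : Fin s) : OrbGroup r s t m n :=
  CoprodI.of (show Fac r s t m n (.inr (.inl j)) from
    Multiplicative.ofAdd ((0, 1) : ZMod 4 × ℤ))

/-- The order-4 generator `d_k` of the `k`-th `ℤ/4` factor. -/
def genD (k : Fin t) : OrbGroup r s t m n :=
  CoprodI.of (show Fac r s t m n (.inr (.inr (.inl k))) from
    Multiplicative.ofAdd (1 : ZMod 4))

/-- The order-2 generator `e_l` of the `l`-th `ℤ/2 × ℤ` factor. -/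
def genE (l : Fin m) : OrbGroup r s t m n :=
  CoprodI.of (show Fac r s t m n (.inr (.inr (.inr (.inl l)))) from
    Multiplicative.ofAdd ((1, 0) : ZMod 2 × ℤ))

/-- The infinite-order generator `f_l` of the `l`-th `ℤ/2 × ℤ` factor. -/
def genF (l : Fin m) : OrbGroup r s t m n :=
  CoprodI.of (show Fac r s t m n (.inr (.inr (.inr (.inl l)))) from
    Multiplicative.ofAdd ((0, 1) : ZMod 2 × ℤ))

/-- The order-2 generator `g_q` of the `q`-th `ℤ/2` factor. -/
def genG (q : Fin n) : OrbGroup r s t m n :=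
  CoprodI.of (show Fac r s t m n (.inr (.inr (.inr (.inr q)))) from
    Multiplicative.ofAdd (1 : ZMod 2))

/-- An automorphism of `G(r,s,t,m,n)` is admissible (the algebraic characterization of
realizable automorphisms from Lemma 2.2) if it sends each torsion-related generator to a
conjugate of the appropriate normal form. -/
def Admissible (α : OrbGroup r s t m n ≃* OrbGroup r s t m n) : Prop :=
  ∃ (σ : Equiv.Perm (Fin s)) (τ : Equiv.Perm (Fin t)) (γ : Equiv.Perm (Fin m))
    (ξ : Equiv.Perm (Fin n))
    (x : Fin s → OrbGroup r s t m n) (y : Fin t → OrbGroup r s t m n)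
    (u : Fin m → OrbGroup r s t m n) (z : Fin n → OrbGroup r s t m n)
    (ε : Fin s → ℤ) (δ : Fin t → ℤ) (ε' : Fin m → ℤ) (δ' : Fin n → ℤ)
    (v : Fin s → ℕ) (w : Fin m → ℕ),
    (∀ j, ε j = 1 ∨ ε j = -1) ∧ (∀ k, δ k = 1 ∨ δ k = -1) ∧
    (∀ l, ε' l = 1 ∨ ε' l = -1) ∧ (∀ q, δ' q = 1 ∨ δ' q = -1) ∧
    (∀ j, v j < 4) ∧ (∀ l, w l < 2) ∧
    (∀ j, α (genB j) = x j * genB (σ j) ^ ε j * (x j)⁻¹) ∧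
    (∀ j, α (genC j) = x j * genB (σ j) ^ v j * genC (σ j) ^ ε j * (x j)⁻¹) ∧
    (∀ k, α (genD k) = y k * genD (τ k) ^ δ k * (y k)⁻¹) ∧
    (∀ l, α (genE l) = u l * genE (γ l) ^ ε' l * (u l)⁻¹) ∧
    (∀ l, α (genF l) = u l * genE (γ l) ^ w l * genF (γ l) ^ ε' l * (u l)⁻¹) ∧
    (∀ q, α (genG q) = z q * genG (ξ q) ^ δ' q * (z q)⁻¹)

/-- `λ` is "finite injective": its restriction to each finite cyclic subgroup
`⟨b_j⟩`, `⟨d_k⟩`, `⟨e_l⟩`, `⟨g_q⟩` is injective. -/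
def InjOnTorsion {r s t m n : ℕ}
    (lam : OrbGroup r s t m n →* Multiplicative (ZMod 4)) : Prop :=
  (∀ j : Fin s, Set.InjOn lam
    ((Subgroup.zpowers (genB j) : Subgroup (OrbGroup r s t m n)) : Set (OrbGroup r s t m n))) ∧
  (∀ k : Fin t, Set.InjOn lam
    ((Subgroup.zpowers (genD k) : Subgroup (OrbGroup r s t m n)) : Set (OrbGroup r s t m n))) ∧
  (∀ l : Fin m, Set.InjOn lam
    ((Subgroup.zpowers (genE l) : Subgroup (OrbGroup r s t m n)) : Set (OrbGroup r s t m n))) ∧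
  (∀ q : Fin n, Set.InjOn lam
    ((Subgroup.zpowers (genG q) : Subgroup (OrbGroup r s t m n)) : Set (OrbGroup r s t m n)))


namespace OrbAux

open Monoid CoprodI Multiplicative

variable {r s t m n : ℕ}

abbrev aIdx (i : Fin r) : Idx r s t m n := .inl i
abbrev bIdx (j : Fin s) : Idx r s t m n := .inr (.inl j)
abbrev dIdx (k : Fin t) : Idx r s t m n := .inr (.inr (.inl k))
abbrev eIdx (l : Fin m) : Idx r s t m n := .inr (.inr (.inr (.inl l)))
abbrev gIdx (q : Fin n) : Idx r s t m n := .inr (.inr (.inr (.inr q)))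

/-! ### Decomposition of factor elements into generators -/

lemma ofA (i : Fin r) (z : ℤ) :
    (CoprodI.of (show Fac r s t m n (aIdx i) from ofAdd z)) = genA i ^ z := by
  rw [genA, ← map_zpow]
  congr 1
  have hm : (ofAdd z : Multiplicative ℤ) = (ofAdd (1 : ℤ)) ^ z := by
    apply Multiplicative.toAdd.injective
    simp [toAdd_zpow]
  exact hm

lemma ofB (j : Fin s) (x : ZMod 4) (y : ℤ) :
    (CoprodI.of (show Fac r s t m n (bIdx j) from ofAdd (x, y)))
      = genB j ^ x.val * genC j ^ y := by
  rw [genB, genC, ← map_pow, ← map_zpow, ← map_mul]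
  congr 1
  have hm : (ofAdd (x, y) : Multiplicative (ZMod 4 × ℤ))
      = (ofAdd ((1 : ZMod 4), (0 : ℤ))) ^ x.val * (ofAdd ((0 : ZMod 4), (1 : ℤ))) ^ y := by
    apply Multiplicative.toAdd.injective
    simp [toAdd_zpow, toAdd_pow, Prod.smul_mk, Prod.ext_iff, nsmul_eq_mul,
      ZMod.natCast_val, ZMod.cast_id]
  exact hm

lemma ofD (k : Fin t) (x : ZMod 4) :
    (CoprodI.of (show Fac r s t m n (dIdx k) from ofAdd x)) = genD k ^ x.val := by
  rw [genD, ← map_pow]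
  congr 1
  have hm : (ofAdd x : Multiplicative (ZMod 4)) = (ofAdd (1 : ZMod 4)) ^ x.val := by
    apply Multiplicative.toAdd.injective
    simp [toAdd_pow, nsmul_eq_mul, ZMod.natCast_val, ZMod.cast_id]
  exact hm

lemma ofE (l : Fin m) (x : ZMod 2) (y : ℤ) :
    (CoprodI.of (show Fac r s t m n (eIdx l) from ofAdd (x, y)))
      = genE l ^ x.val * genF l ^ y := by
  rw [genE, genF, ← map_pow, ← map_zpow, ← map_mul]
  congr 1
  have hm : (ofAdd (x, y) : Multiplicative (ZMod 2 × ℤ))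
      = (ofAdd ((1 : ZMod 2), (0 : ℤ))) ^ x.val * (ofAdd ((0 : ZMod 2), (1 : ℤ))) ^ y := by
    apply Multiplicative.toAdd.injective
    simp [toAdd_zpow, toAdd_pow, Prod.smul_mk, Prod.ext_iff, nsmul_eq_mul,
      ZMod.natCast_val, ZMod.cast_id]
  exact hm

lemma ofG (q : Fin n) (x : ZMod 2) :
    (CoprodI.of (show Fac r s t m n (gIdx q) from ofAdd x)) = genG q ^ x.val := by
  rw [genG, ← map_pow]
  congr 1
  have hm : (ofAdd x : Multiplicative (ZMod 2)) = (ofAdd (1 : ZMod 2)) ^ x.val := by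
    apply Multiplicative.toAdd.injective
    simp [toAdd_pow, nsmul_eq_mul, ZMod.natCast_val, ZMod.cast_id]
  exact hm

/-! ### Extensionality for homs out of `OrbGroup` -/

lemma hom_ext' {H : Type*} [Group H] {f g : OrbGroup r s t m n →* H}
    (hA : ∀ i, f (genA i) = g (genA i))
    (hB : ∀ j, f (genB j) = g (genB j))
    (hC : ∀ j, f (genC j) = g (genC j))
    (hD : ∀ k, f (genD k) = g (genD k))
    (hE : ∀ l, f (genE l) = g (genE l))
    (hF : ∀ l, f (genF l) = g (genF l))
    (hG : ∀ q, f (genG q) = g (genG q)) : f = g := by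
  refine CoprodI.ext_hom _ _ fun i => ?_
  rcases i with i | j | k | l | q <;> refine MonoidHom.ext fun x => ?_ <;>
    simp only [MonoidHom.comp_apply]
  · have hx : (CoprodI.of x : OrbGroup r s t m n)
        = genA i ^ (toAdd (show Multiplicative ℤ from x)) := ofA i _
    rw [hx, map_zpow, map_zpow, hA]
  · have hx : (CoprodI.of x : OrbGroup r s t m n)
        = genB j ^ ((toAdd (show Multiplicative (ZMod 4 × ℤ) from x)).1).val
          * genC j ^ (toAdd (show Multiplicative (ZMod 4 × ℤ) from x)).2 := ofB j _ _
    rw [hx, map_mul, map_mul, map_pow, map_pow, map_zpow, map_zpow, hB, hC]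
  · have hx : (CoprodI.of x : OrbGroup r s t m n)
        = genD k ^ (toAdd (show Multiplicative (ZMod 4) from x)).val := ofD k _
    rw [hx, map_pow, map_pow, hD]
  · have hx : (CoprodI.of x : OrbGroup r s t m n)
        = genE l ^ ((toAdd (show Multiplicative (ZMod 2 × ℤ) from x)).1).val
          * genF l ^ (toAdd (show Multiplicative (ZMod 2 × ℤ) from x)).2 := ofE l _ _
    rw [hx, map_mul, map_mul, map_pow, map_pow, map_zpow, map_zpow, hE, hF]
  · have hx : (CoprodI.of x : OrbGroup r s t m n)
        = genG q ^ (toAdd (show Multiplicative (ZMod 2) from x)).val := ofG q _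
    rw [hx, map_pow, map_pow, hG]

end OrbAux

namespace OrbAux
open Monoid CoprodI Multiplicative
variable {r s t m n : ℕ}

/-! ### Generator power computations -/

lemma genB_zpow (j : Fin s) (z : ℤ) :
    genB j ^ z
      = CoprodI.of (show Fac r s t m n (bIdx j) from ofAdd (((z : ZMod 4)), (0 : ℤ))) := by
  rw [genB, ← map_zpow]
  congr 1
  have hm : (ofAdd ((1 : ZMod 4), (0 : ℤ)) : Multiplicative (ZMod 4 × ℤ)) ^ z
      = ofAdd (((z : ZMod 4)), (0 : ℤ)) := by
    apply Multiplicative.toAdd.injective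
    simp [toAdd_zpow, Prod.smul_mk, zsmul_eq_mul]
  exact hm

lemma genD_zpow (k : Fin t) (z : ℤ) :
    genD k ^ z = CoprodI.of (show Fac r s t m n (dIdx k) from ofAdd ((z : ZMod 4))) := by
  rw [genD, ← map_zpow]
  congr 1
  have hm : (ofAdd (1 : ZMod 4) : Multiplicative (ZMod 4)) ^ z = ofAdd ((z : ZMod 4)) := by
    apply Multiplicative.toAdd.injective
    simp [toAdd_zpow, zsmul_eq_mul]
  exact hm

lemma genE_zpow (l : Fin m) (z : ℤ) :
    genE l ^ z
      = CoprodI.of (show Fac r s t m n (eIdx l) from ofAdd (((z : ZMod 2)), (0 : ℤ))) := by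
  rw [genE, ← map_zpow]
  congr 1
  have hm : (ofAdd ((1 : ZMod 2), (0 : ℤ)) : Multiplicative (ZMod 2 × ℤ)) ^ z
      = ofAdd (((z : ZMod 2)), (0 : ℤ)) := by
    apply Multiplicative.toAdd.injective
    simp [toAdd_zpow, Prod.smul_mk, zsmul_eq_mul]
  exact hm

lemma genG_zpow (q : Fin n) (z : ℤ) :
    genG q ^ z = CoprodI.of (show Fac r s t m n (gIdx q) from ofAdd ((z : ZMod 2))) := by
  rw [genG, ← map_zpow]
  congr 1
  have hm : (ofAdd (1 : ZMod 2) : Multiplicative (ZMod 2)) ^ z = ofAdd ((z : ZMod 2)) := by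
    apply Multiplicative.toAdd.injective
    simp [toAdd_zpow, zsmul_eq_mul]
  exact hm

lemma genB_zpow_eq_one (j : Fin s) (z : ℤ) :
    genB (r := r) (t := t) (m := m) (n := n) j ^ z = 1 ↔ (z : ZMod 4) = 0 := by
  rw [genB_zpow]
  have h1 : (1 : OrbGroup r s t m n)
      = CoprodI.of (show Fac r s t m n (bIdx j) from ofAdd ((0 : ZMod 4), (0 : ℤ))) := by
    have : (ofAdd ((0 : ZMod 4), (0 : ℤ)) : Multiplicative (ZMod 4 × ℤ)) = 1 := rfl
    rw [show (show Fac r s t m n (bIdx j) from ofAdd ((0 : ZMod 4), (0 : ℤ))) = 1 from this,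
      map_one]
  constructor
  · intro h
    rw [h1] at h
    have := CoprodI.of_injective (bIdx j) h
    have h2 : (((z : ZMod 4)), (0:ℤ)) = ((0 : ZMod 4), (0:ℤ)) :=
      congrArg Multiplicative.toAdd this
    exact (Prod.ext_iff.mp h2).1
  · intro h
    rw [h, h1]

lemma genE_zpow_eq_one (l : Fin m) (z : ℤ) :
    genE (r := r) (s := s) (t := t) (n := n) l ^ z = 1 ↔ (z : ZMod 2) = 0 := by
  rw [genE_zpow]
  have h1 : (1 : OrbGroup r s t m n)
      = CoprodI.of (show Fac r s t m n (eIdx l) from ofAdd ((0 : ZMod 2), (0 : ℤ))) := by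
    have : (ofAdd ((0 : ZMod 2), (0 : ℤ)) : Multiplicative (ZMod 2 × ℤ)) = 1 := rfl
    rw [show (show Fac r s t m n (eIdx l) from ofAdd ((0 : ZMod 2), (0 : ℤ))) = 1 from this,
      map_one]
  constructor
  · intro h
    rw [h1] at h
    have := CoprodI.of_injective (eIdx l) h
    have h2 : (((z : ZMod 2)), (0:ℤ)) = ((0 : ZMod 2), (0:ℤ)) :=
      congrArg Multiplicative.toAdd this
    exact (Prod.ext_iff.mp h2).1
  · intro h
    rw [h, h1]

lemma genD_zpow_eq_one (k : Fin t) (z : ℤ) :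
    genD (r := r) (s := s) (m := m) (n := n) k ^ z = 1 ↔ (z : ZMod 4) = 0 := by
  rw [genD_zpow]
  have h1 : (1 : OrbGroup r s t m n)
      = CoprodI.of (show Fac r s t m n (dIdx k) from ofAdd ((0 : ZMod 4))) := by
    have : (ofAdd ((0 : ZMod 4)) : Multiplicative (ZMod 4)) = 1 := rfl
    rw [show (show Fac r s t m n (dIdx k) from ofAdd ((0 : ZMod 4))) = 1 from this, map_one]
  constructor
  · intro h
    rw [h1] at h
    exact congrArg Multiplicative.toAdd (CoprodI.of_injective (dIdx k) h)
  · intro h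
    rw [h, h1]

lemma genG_zpow_eq_one (q : Fin n) (z : ℤ) :
    genG (r := r) (s := s) (t := t) (m := m) q ^ z = 1 ↔ (z : ZMod 2) = 0 := by
  rw [genG_zpow]
  have h1 : (1 : OrbGroup r s t m n)
      = CoprodI.of (show Fac r s t m n (gIdx q) from ofAdd ((0 : ZMod 2))) := by
    have : (ofAdd ((0 : ZMod 2)) : Multiplicative (ZMod 2)) = 1 := rfl
    rw [show (show Fac r s t m n (gIdx q) from ofAdd ((0 : ZMod 2))) = 1 from this, map_one]
  constructor
  · intro h
    rw [h1] at h
    exact congrArg Multiplicative.toAdd (CoprodI.of_injective (gIdx q) h)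
  · intro h
    rw [h, h1]

lemma genE_zpow_sign (l : Fin m) (e : ℤ) (he : e = 1 ∨ e = -1) :
    genE (r := r) (s := s) (t := t) (n := n) l ^ e = genE l := by
  rcases he with rfl | rfl
  · exact zpow_one _
  · rw [genE_zpow, genE]
    congr 1

end OrbAux

namespace OrbAux
open Monoid CoprodI Multiplicative
variable {r s t m n : ℕ}

/-! ### Equiv from a pair of mutually inverse homs -/

def homEquiv (F G : OrbGroup r s t m n →* OrbGroup r s t m n)
    (h1 : G.comp F = MonoidHom.id _) (h2 : F.comp G = MonoidHom.id _) :
    OrbGroup r s t m n ≃* OrbGroup r s t m n where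
  toFun := F
  invFun := G
  left_inv x := DFunLike.congr_fun h1 x
  right_inv x := DFunLike.congr_fun h2 x
  map_mul' := map_mul F

@[simp] lemma homEquiv_apply (F G h1 h2) (x : OrbGroup r s t m n) :
    homEquiv F G h1 h2 x = F x := rfl

/-- Automorphism of the free product from a family of factor automorphisms. -/
def facAuto (phi : ∀ i, Fac r s t m n i ≃* Fac r s t m n i) :
    OrbGroup r s t m n ≃* OrbGroup r s t m n where
  toFun := CoprodI.lift fun i => CoprodI.of.comp (phi i).toMonoidHom
  invFun := CoprodI.lift fun i => CoprodI.of.comp (phi i).symm.toMonoidHom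
  left_inv x := by
    have h : (CoprodI.lift fun i => (CoprodI.of (M := Fac r s t m n)).comp
          (phi i).symm.toMonoidHom).comp
        (CoprodI.lift fun i => CoprodI.of.comp (phi i).toMonoidHom) = MonoidHom.id _ :=
      CoprodI.ext_hom _ _ fun i => MonoidHom.ext fun x => by
        simp [CoprodI.lift_of]
    exact DFunLike.congr_fun h x
  right_inv x := by
    have h : (CoprodI.lift fun i => (CoprodI.of (M := Fac r s t m n)).comp
          (phi i).toMonoidHom).comp
        (CoprodI.lift fun i => CoprodI.of.comp (phi i).symm.toMonoidHom) = MonoidHom.id _ :=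
      CoprodI.ext_hom _ _ fun i => MonoidHom.ext fun x => by
        simp [CoprodI.lift_of]
    exact DFunLike.congr_fun h x
  map_mul' := map_mul _

@[simp] lemma facAuto_of (phi : ∀ i, Fac r s t m n i ≃* Fac r s t m n i) {i}
    (x : Fac r s t m n i) : facAuto phi (CoprodI.of x) = CoprodI.of (phi i x) :=
  CoprodI.lift_of _ _

/-! ### The factor-wise automorphism data -/

def pAddEquiv (N : ℕ) (e : ℤ) (he : e = 1 ∨ e = -1) (v : ZMod N) :
    (ZMod N × ℤ) ≃+ (ZMod N × ℤ) where
  toFun x := ((e : ZMod N) * x.1 + v * (x.2 : ZMod N), e * x.2)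
  invFun x := ((e : ZMod N) * x.1 - v * (x.2 : ZMod N), e * x.2)
  left_inv x := by
    rcases he with rfl | rfl <;>
      · refine Prod.ext ?_ ?_ <;> simp <;> push_cast <;> ring
  right_inv x := by
    rcases he with rfl | rfl <;>
      · refine Prod.ext ?_ ?_ <;> simp <;> push_cast <;> ring
  map_add' a b := by
    refine Prod.ext ?_ ?_ <;> simp <;> push_cast <;> ring

def qAddEquiv (e : ℤ) (he : e = 1 ∨ e = -1) : ZMod 4 ≃+ ZMod 4 where
  toFun x := (e : ZMod 4) * x
  invFun x := (e : ZMod 4) * x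
  left_inv x := by rcases he with rfl | rfl <;> · simp; try ring_nf; try simp
  right_inv x := by rcases he with rfl | rfl <;> · simp; try ring_nf; try simp
  map_add' a b := by ring

def fFam (e : Fin s → ℤ) (he : ∀ j, e j = 1 ∨ e j = -1) (v : Fin s → ZMod 4)
    (d : Fin t → ℤ) (hd : ∀ k, d k = 1 ∨ d k = -1)
    (e' : Fin m → ℤ) (he' : ∀ l, e' l = 1 ∨ e' l = -1) (w : Fin m → ZMod 2) :
    ∀ i : Idx r s t m n, Fac r s t m n i ≃* Fac r s t m n i
  | .inl _ => MulEquiv.refl _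
  | .inr (.inl j) => (AddEquiv.toMultiplicative (pAddEquiv 4 (e j) (he j) (v j)) :
      Multiplicative (ZMod 4 × ℤ) ≃* Multiplicative (ZMod 4 × ℤ))
  | .inr (.inr (.inl k)) => (AddEquiv.toMultiplicative (qAddEquiv (d k) (hd k)) :
      Multiplicative (ZMod 4) ≃* Multiplicative (ZMod 4))
  | .inr (.inr (.inr (.inl l))) =>
      (AddEquiv.toMultiplicative (pAddEquiv 2 (e' l) (he' l) (w l)) :
      Multiplicative (ZMod 2 × ℤ) ≃* Multiplicative (ZMod 2 × ℤ))
  | .inr (.inr (.inr (.inr _))) => MulEquiv.refl _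

section FautoLemmas

variable (e : Fin s → ℤ) (he : ∀ j, e j = 1 ∨ e j = -1) (v : Fin s → ZMod 4)
    (d : Fin t → ℤ) (hd : ∀ k, d k = 1 ∨ d k = -1)
    (e' : Fin m → ℤ) (he' : ∀ l, e' l = 1 ∨ e' l = -1) (w : Fin m → ZMod 2)

lemma Fauto_genA (i : Fin r) : facAuto (fFam (r := r) (n := n) e he v d hd e' he' w) (genA i) = genA i := by
  show facAuto _ (CoprodI.of _) = _
  rw [facAuto_of]
  rfl

lemma Fauto_genG (q : Fin n) : facAuto (fFam (r := r) (n := n) e he v d hd e' he' w) (genG q) = genG q := by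
  show facAuto _ (CoprodI.of _) = _
  rw [facAuto_of]
  rfl

lemma Fauto_genB (j : Fin s) :
    facAuto (fFam (r := r) (n := n) e he v d hd e' he' w) (genB j) = genB j ^ (e j) := by
  show facAuto _ (CoprodI.of _) = _
  rw [facAuto_of, genB_zpow]
  congr 1
  have hm : (AddEquiv.toMultiplicative (pAddEquiv 4 (e j) (he j) (v j)))
        (ofAdd ((1 : ZMod 4), (0 : ℤ)))
      = ofAdd ((((e j : ZMod 4))), (0 : ℤ)) := by
    apply Multiplicative.toAdd.injective
    show pAddEquiv 4 (e j) (he j) (v j) ((1 : ZMod 4), (0 : ℤ)) = _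
    simp [pAddEquiv]
  exact hm

lemma Fauto_genC (j : Fin s) :
    facAuto (fFam (r := r) (n := n) e he v d hd e' he' w) (genC j)
      = genB j ^ (v j).val * genC j ^ (e j) := by
  show facAuto _ (CoprodI.of _) = _
  rw [facAuto_of, ← ofB j (v j) (e j)]
  congr 1
  have hm : (AddEquiv.toMultiplicative (pAddEquiv 4 (e j) (he j) (v j)))
        (ofAdd ((0 : ZMod 4), (1 : ℤ)))
      = ofAdd ((v j, e j) : ZMod 4 × ℤ) := by
    apply Multiplicative.toAdd.injective
    show pAddEquiv 4 (e j) (he j) (v j) ((0 : ZMod 4), (1 : ℤ)) = _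
    simp [pAddEquiv]
  exact hm

lemma Fauto_genD (k : Fin t) :
    facAuto (fFam (r := r) (n := n) e he v d hd e' he' w) (genD k) = genD k ^ (d k) := by
  show facAuto _ (CoprodI.of _) = _
  rw [facAuto_of, genD_zpow]
  congr 1
  have hm : (AddEquiv.toMultiplicative (qAddEquiv (d k) (hd k))) (ofAdd (1 : ZMod 4))
      = ofAdd (((d k : ZMod 4))) := by
    apply Multiplicative.toAdd.injective
    show qAddEquiv (d k) (hd k) (1 : ZMod 4) = _
    simp [qAddEquiv]
  exact hm

lemma Fauto_genE (l : Fin m) :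
    facAuto (fFam (r := r) (n := n) e he v d hd e' he' w) (genE l) = genE l ^ (e' l) := by
  rw [genE_zpow_sign l (e' l) (he' l)]
  show facAuto _ (CoprodI.of _) = _
  rw [facAuto_of, genE]
  congr 1
  have hm : (AddEquiv.toMultiplicative (pAddEquiv 2 (e' l) (he' l) (w l)))
        (ofAdd ((1 : ZMod 2), (0 : ℤ)))
      = ofAdd (((1 : ZMod 2)), (0 : ℤ)) := by
    apply Multiplicative.toAdd.injective
    show pAddEquiv 2 (e' l) (he' l) (w l) ((1 : ZMod 2), (0 : ℤ)) = _
    have h2 : ((e' l : ZMod 2)) = 1 := by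
      rcases he' l with h | h <;> rw [h] <;> decide
    simp [pAddEquiv, h2]
  exact hm

lemma Fauto_genF (l : Fin m) :
    facAuto (fFam (r := r) (n := n) e he v d hd e' he' w) (genF l)
      = genE l ^ (w l).val * genF l ^ (e' l) := by
  show facAuto _ (CoprodI.of _) = _
  rw [facAuto_of, ← ofE l (w l) (e' l)]
  congr 1
  have hm : (AddEquiv.toMultiplicative (pAddEquiv 2 (e' l) (he' l) (w l)))
        (ofAdd ((0 : ZMod 2), (1 : ℤ)))
      = ofAdd ((w l, e' l) : ZMod 2 × ℤ) := by
    apply Multiplicative.toAdd.injective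
    show pAddEquiv 2 (e' l) (he' l) (w l) ((0 : ZMod 2), (1 : ℤ)) = _
    simp [pAddEquiv]
  exact hm

end FautoLemmas

end OrbAux

namespace OrbAux
open Monoid CoprodI Multiplicative
variable {r s t m n : ℕ}

/-! ### Permutation of the `m`-block -/

def permFam (g : Equiv.Perm (Fin m)) :
    ∀ i : Idx r s t m n, Fac r s t m n i →* OrbGroup r s t m n
  | .inl _ => CoprodI.of
  | .inr (.inl _) => CoprodI.of
  | .inr (.inr (.inl _)) => CoprodI.of
  | .inr (.inr (.inr (.inl l))) =>
      (CoprodI.of : Fac r s t m n (eIdx (g l)) →* OrbGroup r s t m n)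
  | .inr (.inr (.inr (.inr _))) => CoprodI.of

def permHom (g : Equiv.Perm (Fin m)) : OrbGroup r s t m n →* OrbGroup r s t m n :=
  CoprodI.lift (permFam g)

lemma permHom_genA (g : Equiv.Perm (Fin m)) (i : Fin r) :
    permHom (s := s) (t := t) (n := n) g (genA i) = genA i := CoprodI.lift_of _ _

lemma permHom_genB (g : Equiv.Perm (Fin m)) (j : Fin s) :
    permHom (r := r) (t := t) (n := n) g (genB j) = genB j := CoprodI.lift_of _ _

lemma permHom_genC (g : Equiv.Perm (Fin m)) (j : Fin s) :
    permHom (r := r) (t := t) (n := n) g (genC j) = genC j := CoprodI.lift_of _ _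

lemma permHom_genD (g : Equiv.Perm (Fin m)) (k : Fin t) :
    permHom (r := r) (s := s) (n := n) g (genD k) = genD k := CoprodI.lift_of _ _

lemma permHom_genG (g : Equiv.Perm (Fin m)) (q : Fin n) :
    permHom (r := r) (s := s) (t := t) g (genG q) = genG q := CoprodI.lift_of _ _

lemma permHom_genE (g : Equiv.Perm (Fin m)) (l : Fin m) :
    permHom (r := r) (s := s) (t := t) (n := n) g (genE l) = genE (g l) :=
  CoprodI.lift_of _ _

lemma permHom_genF (g : Equiv.Perm (Fin m)) (l : Fin m) :
    permHom (r := r) (s := s) (t := t) (n := n) g (genF l) = genF (g l) :=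
  CoprodI.lift_of _ _

lemma permHom_comp_eq_id (g : Equiv.Perm (Fin m)) :
    (permHom (r := r) (s := s) (t := t) (n := n) g).comp (permHom g⁻¹)
      = MonoidHom.id _ := by
  refine hom_ext' ?_ ?_ ?_ ?_ ?_ ?_ ?_ <;> intro x <;>
    simp [MonoidHom.comp_apply, permHom_genA, permHom_genB, permHom_genC,
      permHom_genD, permHom_genE, permHom_genF, permHom_genG]

def permAuto (g : Equiv.Perm (Fin m)) : OrbGroup r s t m n ≃* OrbGroup r s t m n :=
  homEquiv (permHom g) (permHom g⁻¹)
    (by simpa using permHom_comp_eq_id (r := r) (s := s) (t := t) (n := n) g⁻¹)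
    (permHom_comp_eq_id g)

@[simp] lemma permAuto_apply (g : Equiv.Perm (Fin m)) (x : OrbGroup r s t m n) :
    permAuto g x = permHom g x := rfl

/-! ### Shift automorphism on the free factors -/

def shiftFam (T : Fin r → OrbGroup r s t m n) :
    ∀ i : Idx r s t m n, Fac r s t m n i →* OrbGroup r s t m n
  | .inl i => zpowersHom _ (T i)
  | .inr (.inl _) => CoprodI.of
  | .inr (.inr (.inl _)) => CoprodI.of
  | .inr (.inr (.inr (.inl _))) => CoprodI.of
  | .inr (.inr (.inr (.inr _))) => CoprodI.of

def shiftHom (T : Fin r → OrbGroup r s t m n) : OrbGroup r s t m n →* OrbGroup r s t m n :=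
  CoprodI.lift (shiftFam T)

lemma shiftHom_genA (T : Fin r → OrbGroup r s t m n) (i : Fin r) :
    shiftHom T (genA i) = T i := by
  show CoprodI.lift _ (CoprodI.of _) = _
  rw [CoprodI.lift_of]
  show zpowersHom _ (T i) (ofAdd 1) = T i
  rw [zpowersHom_apply]
  simp

lemma shiftHom_genB (T : Fin r → OrbGroup r s t m n) (j : Fin s) :
    shiftHom T (genB j) = genB j := CoprodI.lift_of _ _

lemma shiftHom_genC (T : Fin r → OrbGroup r s t m n) (j : Fin s) :
    shiftHom T (genC j) = genC j := CoprodI.lift_of _ _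

lemma shiftHom_genD (T : Fin r → OrbGroup r s t m n) (k : Fin t) :
    shiftHom T (genD k) = genD k := CoprodI.lift_of _ _

lemma shiftHom_genE (T : Fin r → OrbGroup r s t m n) (l : Fin m) :
    shiftHom T (genE l) = genE l := CoprodI.lift_of _ _

lemma shiftHom_genF (T : Fin r → OrbGroup r s t m n) (l : Fin m) :
    shiftHom T (genF l) = genF l := CoprodI.lift_of _ _

lemma shiftHom_genG (T : Fin r → OrbGroup r s t m n) (q : Fin n) :
    shiftHom T (genG q) = genG q := CoprodI.lift_of _ _

def shiftEquiv (T T' : Fin r → OrbGroup r s t m n)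
    (h1 : ∀ i, shiftHom T (T' i) = genA i) (h2 : ∀ i, shiftHom T' (T i) = genA i) :
    OrbGroup r s t m n ≃* OrbGroup r s t m n :=
  homEquiv (shiftHom T) (shiftHom T')
    (hom_ext' (fun i => by simp [MonoidHom.comp_apply, shiftHom_genA, h2])
      (fun j => by simp [MonoidHom.comp_apply, shiftHom_genB])
      (fun j => by simp [MonoidHom.comp_apply, shiftHom_genC])
      (fun k => by simp [MonoidHom.comp_apply, shiftHom_genD])
      (fun l => by simp [MonoidHom.comp_apply, shiftHom_genE])
      (fun l => by simp [MonoidHom.comp_apply, shiftHom_genF])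
      (fun q => by simp [MonoidHom.comp_apply, shiftHom_genG]))
    (hom_ext' (fun i => by simp [MonoidHom.comp_apply, shiftHom_genA, h1])
      (fun j => by simp [MonoidHom.comp_apply, shiftHom_genB])
      (fun j => by simp [MonoidHom.comp_apply, shiftHom_genC])
      (fun k => by simp [MonoidHom.comp_apply, shiftHom_genD])
      (fun l => by simp [MonoidHom.comp_apply, shiftHom_genE])
      (fun l => by simp [MonoidHom.comp_apply, shiftHom_genF])
      (fun q => by simp [MonoidHom.comp_apply, shiftHom_genG]))

@[simp] lemma shiftEquiv_apply (T T' h1 h2) (x : OrbGroup r s t m n) :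
    shiftEquiv T T' h1 h2 x = shiftHom T x := rfl

end OrbAux

namespace OrbAux
open Monoid CoprodI Multiplicative
variable {r s t m n : ℕ}

lemma lam_zpow_ne (lam : OrbGroup r s t m n →* Multiplicative (ZMod 4))
    (x : OrbGroup r s t m n)
    (hx : Set.InjOn lam ((Subgroup.zpowers x : Subgroup (OrbGroup r s t m n)) :
      Set (OrbGroup r s t m n)))
    (z : ℤ) (hz : x ^ z ≠ 1) : (lam x) ^ z ≠ 1 := by
  intro h
  apply hz
  apply hx (Subgroup.zpow_mem _ (Subgroup.mem_zpowers x) z) (Subgroup.one_mem _)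
  rw [map_zpow, h, map_one]

lemma lamB_val (lam : OrbGroup r s t m n →* Multiplicative (ZMod 4)) (j : Fin s)
    (hj : Set.InjOn lam ((Subgroup.zpowers (genB j) : Subgroup (OrbGroup r s t m n)) :
      Set (OrbGroup r s t m n))) :
    toAdd (lam (genB j)) = 1 ∨ toAdd (lam (genB j)) = 3 := by
  have h1 := lam_zpow_ne lam (genB j) hj 1
    (fun h => absurd ((genB_zpow_eq_one j 1).mp h) (by decide))
  have h2 := lam_zpow_ne lam (genB j) hj 2
    (fun h => absurd ((genB_zpow_eq_one j 2).mp h) (by decide))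
  have hb1 : toAdd (lam (genB j)) ≠ 0 := by
    intro h
    exact h1 (by apply Multiplicative.toAdd.injective; simp [toAdd_zpow, h])
  have hb2 : toAdd (lam (genB j)) + toAdd (lam (genB j)) ≠ 0 := by
    intro h
    refine h2 (by apply Multiplicative.toAdd.injective; simp [toAdd_zpow, two_zsmul, two_mul, h])
  revert hb1 hb2
  generalize toAdd (lam (genB j)) = x
  revert x
  decide

lemma lamD_val (lam : OrbGroup r s t m n →* Multiplicative (ZMod 4)) (k : Fin t)
    (hk : Set.InjOn lam ((Subgroup.zpowers (genD k) : Subgroup (OrbGroup r s t m n)) :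
      Set (OrbGroup r s t m n))) :
    toAdd (lam (genD k)) = 1 ∨ toAdd (lam (genD k)) = 3 := by
  have h1 := lam_zpow_ne lam (genD k) hk 1
    (fun h => absurd ((genD_zpow_eq_one k 1).mp h) (by decide))
  have h2 := lam_zpow_ne lam (genD k) hk 2
    (fun h => absurd ((genD_zpow_eq_one k 2).mp h) (by decide))
  have hb1 : toAdd (lam (genD k)) ≠ 0 := by
    intro h
    exact h1 (by apply Multiplicative.toAdd.injective; simp [toAdd_zpow, h])
  have hb2 : toAdd (lam (genD k)) + toAdd (lam (genD k)) ≠ 0 := by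
    intro h
    refine h2 (by apply Multiplicative.toAdd.injective; simp [toAdd_zpow, two_zsmul, two_mul, h])
  revert hb1 hb2
  generalize toAdd (lam (genD k)) = x
  revert x
  decide

lemma lamE_val (lam : OrbGroup r s t m n →* Multiplicative (ZMod 4)) (l : Fin m)
    (hl : Set.InjOn lam ((Subgroup.zpowers (genE l) : Subgroup (OrbGroup r s t m n)) :
      Set (OrbGroup r s t m n))) :
    lam (genE l) = ofAdd (2 : ZMod 4) := by
  have h1 := lam_zpow_ne lam (genE l) hl 1
    (fun h => absurd ((genE_zpow_eq_one l 1).mp h) (by decide))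
  have hb1 : toAdd (lam (genE l)) ≠ 0 := by
    intro h
    exact h1 (by apply Multiplicative.toAdd.injective; simp [toAdd_zpow, h])
  have h2 : genE (r := r) (s := s) (t := t) (n := n) l ^ (2 : ℤ) = 1 :=
    (genE_zpow_eq_one l 2).mpr (by decide)
  have hb2 : toAdd (lam (genE l)) + toAdd (lam (genE l)) = 0 := by
    have := congrArg lam h2
    rw [map_zpow, map_one] at this
    have := congrArg Multiplicative.toAdd this
    simpa [toAdd_zpow, two_zsmul, two_mul] using this
  apply Multiplicative.toAdd.injective
  revert hb1 hb2
  generalize toAdd (lam (genE l)) = x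
  revert x
  decide

lemma lamG_val (lam : OrbGroup r s t m n →* Multiplicative (ZMod 4)) (q : Fin n)
    (hq : Set.InjOn lam ((Subgroup.zpowers (genG q) : Subgroup (OrbGroup r s t m n)) :
      Set (OrbGroup r s t m n))) :
    lam (genG q) = ofAdd (2 : ZMod 4) := by
  have h1 := lam_zpow_ne lam (genG q) hq 1
    (fun h => absurd ((genG_zpow_eq_one q 1).mp h) (by decide))
  have hb1 : toAdd (lam (genG q)) ≠ 0 := by
    intro h
    exact h1 (by apply Multiplicative.toAdd.injective; simp [toAdd_zpow, h])
  have h2 : genG (r := r) (s := s) (t := t) (m := m) q ^ (2 : ℤ) = 1 :=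
    (genG_zpow_eq_one q 2).mpr (by decide)
  have hb2 : toAdd (lam (genG q)) + toAdd (lam (genG q)) = 0 := by
    have := congrArg lam h2
    rw [map_zpow, map_one] at this
    have := congrArg Multiplicative.toAdd this
    simpa [toAdd_zpow, two_zsmul, two_mul] using this
  apply Multiplicative.toAdd.injective
  revert hb1 hb2
  generalize toAdd (lam (genG q)) = x
  revert x
  decide

/-! ### Sorting permutation -/

lemma exists_perm_sort (p : Fin m → Prop) [DecidablePred p] :
    ∃ (k : ℕ) (g : Equiv.Perm (Fin m)), k ≤ m ∧ ∀ i : Fin m, (p (g i) ↔ (i : ℕ) < k) := by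
  classical
  set k := Fintype.card {x : Fin m // p x} with hkdef
  have hk : k ≤ m := by
    simpa using Fintype.card_subtype_le p
  have c1 : Fintype.card {i : Fin m // (i : ℕ) < k} = k := by
    have e : {i : Fin m // (i : ℕ) < k} ≃ Fin k :=
      { toFun := fun x => ⟨x.1.1, x.2⟩
        invFun := fun y => ⟨⟨y.1, lt_of_lt_of_le y.2 hk⟩, y.2⟩
        left_inv := fun x => by ext; rfl
        right_inv := fun y => by ext; rfl }
    simp [Fintype.card_congr e]
  have c2 : Fintype.card {i : Fin m // ¬ ((i : ℕ) < k)} = Fintype.card {x : Fin m // ¬ p x} := by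
    have h1 : Fintype.card {i : Fin m // ¬ ((i : ℕ) < k)} = m - k := by
      have := Fintype.card_subtype_compl (fun i : Fin m => (i : ℕ) < k)
      rw [this, c1, Fintype.card_fin]
    have h2 : Fintype.card {x : Fin m // ¬ p x} = m - k := by
      have := Fintype.card_subtype_compl p
      rw [this, Fintype.card_fin, hkdef]
    rw [h1, h2]
  obtain e1 := Fintype.equivOfCardEq (by rw [c1] :
    Fintype.card {i : Fin m // (i : ℕ) < k} = Fintype.card {x : Fin m // p x})
  obtain e2 := Fintype.equivOfCardEq c2
  refine ⟨k, Equiv.subtypeCongr e1 e2, hk, fun i => ?_⟩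
  by_cases h : (i : ℕ) < k
  · have : Equiv.subtypeCongr e1 e2 i = (e1 ⟨i, h⟩ : Fin m) := by
      simp [Equiv.subtypeCongr, h]
    rw [this]
    simpa [h] using (e1 ⟨i, h⟩).2
  · have : Equiv.subtypeCongr e1 e2 i = (e2 ⟨i, h⟩ : Fin m) := by
      simp [Equiv.subtypeCongr, h]
    rw [this]
    simpa [h] using (e2 ⟨i, h⟩).2

end OrbAux

namespace OrbAux
open Monoid CoprodI Multiplicative

def prHom : Multiplicative (ZMod 4) →* Multiplicative (ZMod 2) :=
  AddMonoidHom.toMultiplicative ((ZMod.castHom (by norm_num : (2:ℕ) ∣ 4) (ZMod 2)).toAddMonoidHom)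

lemma prHom_even : ∀ y : Multiplicative (ZMod 4),
    toAdd y ≠ 1 → toAdd y ≠ 3 → prHom y = 1 := by decide

lemma prHom_two : ∀ y : Multiplicative (ZMod 4), toAdd y = 2 → prHom y = 1 := by decide

lemma prHom_one_ne : prHom (ofAdd (1 : ZMod 4)) ≠ 1 := by decide

end OrbAux

/-- Algebraic form of Lemma 2.4: every finite injective epimorphism `λ : G → ℤ/4` can be
normalized by an admissible automorphism `α`: setting `λ' = λ ∘ α`, one has `λ'(a_i) = 1`,
`λ'(b_j) = 1`, `λ'(c_j) = 0`, `λ'(d_k) = 1`, `λ'(e_l) = 2`, `λ'(g_q) = 2`, and there is a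
`k ≤ m` with `λ'(f_i) = 1` for the first `k` indices `i` and `λ'(f_i) = 0` for the rest. -/
theorem normalization {r s t m n : ℕ}
    (lam : OrbGroup r s t m n →* Multiplicative (ZMod 4))
    (hsurj : Function.Surjective lam) (hinj : InjOnTorsion lam) :
    ∃ (α : OrbGroup r s t m n ≃* OrbGroup r s t m n) (k : ℕ), Admissible α ∧ k ≤ m ∧
      (∀ i : Fin r, lam (α (genA i)) = Multiplicative.ofAdd (1 : ZMod 4)) ∧
      (∀ j : Fin s, lam (α (genB j)) = Multiplicative.ofAdd (1 : ZMod 4)) ∧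
      (∀ j : Fin s, lam (α (genC j)) = Multiplicative.ofAdd (0 : ZMod 4)) ∧
      (∀ k' : Fin t, lam (α (genD k')) = Multiplicative.ofAdd (1 : ZMod 4)) ∧
      (∀ l : Fin m, lam (α (genE l)) = Multiplicative.ofAdd (2 : ZMod 4)) ∧
      (∀ i : Fin m, (i : ℕ) < k → lam (α (genF i)) = Multiplicative.ofAdd (1 : ZMod 4)) ∧
      (∀ i : Fin m, k ≤ (i : ℕ) → lam (α (genF i)) = Multiplicative.ofAdd (0 : ZMod 4)) ∧
      (∀ q : Fin n, lam (α (genG q)) = Multiplicative.ofAdd (2 : ZMod 4)) := open OrbAux CoprodI Multiplicative in by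
  classical
  obtain ⟨hinjB, hinjD, hinjE, hinjG⟩ := hinj
  have zmod4cases : ∀ x : ZMod 4, x = 0 ∨ x = 1 ∨ x = 2 ∨ x = 3 := by decide
  have hE2 : ∀ l : Fin m, lam (genE l) = ofAdd (2 : ZMod 4) := fun l => lamE_val lam l (hinjE l)
  have hG2 : ∀ q : Fin n, lam (genG q) = ofAdd (2 : ZMod 4) := fun q => lamG_val lam q (hinjG q)
  -- B data
  have hBdata : ∀ j : Fin s, ∃ ee : ℤ, (ee = 1 ∨ ee = -1) ∧
      lam (genB j ^ ee) = ofAdd (1 : ZMod 4) := by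
    intro j
    rcases lamB_val lam j (hinjB j) with h | h
    · refine ⟨1, Or.inl rfl, ?_⟩
      apply Multiplicative.toAdd.injective
      rw [map_zpow, toAdd_zpow, h]
      decide
    · refine ⟨-1, Or.inr rfl, ?_⟩
      apply Multiplicative.toAdd.injective
      rw [map_zpow, toAdd_zpow, h]
      decide
  choose e he1 heB using hBdata
  -- C data
  have hCdata : ∀ j : Fin s, ∃ vv : ZMod 4,
      lam (genB j ^ vv.val * genC j ^ e j) = ofAdd (0 : ZMod 4) := by
    intro j
    refine ⟨(-((e j : ℤ) : ZMod 4)) * toAdd (lam (genC j)) * toAdd (lam (genB j)), ?_⟩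
    apply Multiplicative.toAdd.injective
    rw [map_mul, map_pow, map_zpow, toAdd_mul, toAdd_pow, toAdd_zpow, nsmul_eq_mul,
      zsmul_eq_mul, ZMod.natCast_val, ZMod.cast_id]
    rcases lamB_val lam j (hinjB j) with h | h <;> rcases he1 j with h1 | h1 <;> rw [h, h1] <;>
      · push_cast
        generalize toAdd (lam (genC j)) = c
        revert c
        decide
  choose v hvB using hCdata
  -- D data
  have hDdata : ∀ k : Fin t, ∃ dd : ℤ, (dd = 1 ∨ dd = -1) ∧
      lam (genD k ^ dd) = ofAdd (1 : ZMod 4) := by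
    intro k
    rcases lamD_val lam k (hinjD k) with h | h
    · refine ⟨1, Or.inl rfl, ?_⟩
      apply Multiplicative.toAdd.injective
      rw [map_zpow, toAdd_zpow, h]
      decide
    · refine ⟨-1, Or.inr rfl, ?_⟩
      apply Multiplicative.toAdd.injective
      rw [map_zpow, toAdd_zpow, h]
      decide
  choose d hd1 hdD using hDdata
  -- sorting permutation for the f-generators
  obtain ⟨k, gp, hk, hsort⟩ := exists_perm_sort
    (fun l : Fin m => toAdd (lam (genF l)) = 1 ∨ toAdd (lam (genF l)) = 3)
  -- F data
  have hFdata : ∀ l : Fin m, ∃ (ee : ℤ) (ww : ZMod 2), (ee = 1 ∨ ee = -1) ∧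
      lam (genE (gp l) ^ ww.val * genF (gp l) ^ ee)
        = ofAdd (if (l : ℕ) < k then (1 : ZMod 4) else 0) := by
    intro l
    have hs := hsort l
    rcases zmod4cases (toAdd (lam (genF (gp l)))) with h | h | h | h
    · have hnk : ¬ ((l : ℕ) < k) := by rw [← hs, h]; decide
      refine ⟨1, 0, Or.inl rfl, ?_⟩
      rw [if_neg hnk]
      apply Multiplicative.toAdd.injective
      rw [map_mul, map_pow, map_zpow, hE2 (gp l), toAdd_mul, toAdd_pow, toAdd_zpow, h]
      decide
    · have hnk : (l : ℕ) < k := by rw [← hs, h]; decide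
      refine ⟨1, 0, Or.inl rfl, ?_⟩
      rw [if_pos hnk]
      apply Multiplicative.toAdd.injective
      rw [map_mul, map_pow, map_zpow, hE2 (gp l), toAdd_mul, toAdd_pow, toAdd_zpow, h]
      decide
    · have hnk : ¬ ((l : ℕ) < k) := by rw [← hs, h]; decide
      refine ⟨1, 1, Or.inl rfl, ?_⟩
      rw [if_neg hnk]
      apply Multiplicative.toAdd.injective
      rw [map_mul, map_pow, map_zpow, hE2 (gp l), toAdd_mul, toAdd_pow, toAdd_zpow, h]
      decide
    · have hnk : (l : ℕ) < k := by rw [← hs, h]; decide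
      refine ⟨-1, 0, Or.inr rfl, ?_⟩
      rw [if_pos hnk]
      apply Multiplicative.toAdd.injective
      rw [map_mul, map_pow, map_zpow, hE2 (gp l), toAdd_mul, toAdd_pow, toAdd_zpow, h]
      decide
  choose e' w he'1 hF using hFdata
  -- pivot-shift construction for a pivot fixed by every shift homomorphism
  have hshift : ∀ X : OrbGroup r s t m n,
      (∀ T : Fin r → OrbGroup r s t m n, shiftHom T X = X) →
      lam (permHom gp (facAuto (fFam (r := r) (n := n) e he1 v d hd1 e' he'1 w) X))
        = ofAdd (1 : ZMod 4) →
      ∃ T T' : Fin r → OrbGroup r s t m n,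
        (∀ i, shiftHom T (T' i) = genA i) ∧ (∀ i, shiftHom T' (T i) = genA i) ∧
        (∀ i, lam (permHom gp (facAuto (fFam (r := r) (n := n) e he1 v d hd1 e' he'1 w) (T i)))
          = ofAdd (1 : ZMod 4)) := by
    intro X hfix hlam
    refine ⟨fun i => genA i * X ^ (((1 - toAdd (lam (genA i))).val : ℕ) : ℤ),
      fun i => genA i * X ^ (-(((1 - toAdd (lam (genA i))).val : ℕ) : ℤ)), ?_, ?_, ?_⟩
    · intro i
      beta_reduce
      rw [map_mul, map_zpow, shiftHom_genA, hfix]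
      beta_reduce
      group
    · intro i
      beta_reduce
      rw [map_mul, map_zpow, shiftHom_genA, hfix]
      beta_reduce
      group
    · intro i
      beta_reduce
      rw [map_mul, map_zpow, map_mul, map_zpow, Fauto_genA, permHom_genA, map_mul, map_zpow,
        hlam]
      apply Multiplicative.toAdd.injective
      rw [toAdd_mul, toAdd_zpow]
      simp only [toAdd_ofAdd]
      rw [zsmul_eq_mul, mul_one]
      push_cast [ZMod.natCast_val, ZMod.cast_id]
      ring
  -- obtain the shift data by cases
  obtain ⟨T, T', hT1, hT2, hTA⟩ :
      ∃ T T' : Fin r → OrbGroup r s t m n,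
        (∀ i, shiftHom T (T' i) = genA i) ∧ (∀ i, shiftHom T' (T i) = genA i) ∧
        (∀ i, lam (permHom gp (facAuto (fFam (r := r) (n := n) e he1 v d hd1 e' he'1 w) (T i)))
          = ofAdd (1 : ZMod 4)) := by
    rcases Nat.eq_zero_or_pos s with hs0 | hs0
    · rcases Nat.eq_zero_or_pos t with ht0 | ht0
      · by_cases hf : ∃ l : Fin m, toAdd (lam (genF l)) = 1 ∨ toAdd (lam (genF l)) = 3
        · obtain ⟨l₀, hl₀⟩ := hf
          have hm0 : 0 < m := l₀.pos
          have hk0 : (0 : ℕ) < k := by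
            have h := hsort (gp⁻¹ l₀)
            rw [← Equiv.Perm.mul_apply, mul_inv_cancel, Equiv.Perm.one_apply] at h
            have := h.mp hl₀
            omega
          refine hshift (genF ⟨0, hm0⟩) (fun T => shiftHom_genF T _) ?_
          rw [Fauto_genF, map_mul, map_pow, map_zpow, permHom_genE, permHom_genF]
          have hh := hF ⟨0, hm0⟩
          rw [if_pos (show ((⟨0, hm0⟩ : Fin m) : ℕ) < k from hk0)] at hh
          exact hh
        · by_cases ha : ∃ i : Fin r, toAdd (lam (genA i)) = 1 ∨ toAdd (lam (genA i)) = 3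
          · -- case D: pivot among the free generators
            obtain ⟨i₀, hu⟩ := ha
            rcases hu with hu | hu
            · refine ⟨fun i => if i = i₀ then genA i₀ else
                  genA i * genA i₀ ^ (((1 - toAdd (lam (genA i))).val : ℕ) : ℤ),
                fun i => if i = i₀ then genA i₀ else
                  genA i * genA i₀ ^ (-(((1 - toAdd (lam (genA i))).val : ℕ) : ℤ)), ?_, ?_, ?_⟩
              · intro i
                beta_reduce
                by_cases hi : i = i₀
                · subst hi
                  rw [if_pos rfl, shiftHom_genA]
                  beta_reduce
                  rw [if_pos rfl]
                · rw [if_neg hi, map_mul, map_zpow, shiftHom_genA, shiftHom_genA]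
                  beta_reduce
                  rw [if_neg hi, if_pos rfl]
                  group
              · intro i
                beta_reduce
                by_cases hi : i = i₀
                · subst hi
                  rw [if_pos rfl, shiftHom_genA]
                  beta_reduce
                  rw [if_pos rfl]
                · rw [if_neg hi, map_mul, map_zpow, shiftHom_genA, shiftHom_genA]
                  beta_reduce
                  rw [if_neg hi, if_pos rfl]
                  group
              · intro i
                beta_reduce
                by_cases hi : i = i₀
                · subst hi
                  rw [if_pos rfl, Fauto_genA, permHom_genA]
                  apply Multiplicative.toAdd.injective
                  simp only [toAdd_ofAdd]
                  exact hu
                · rw [if_neg hi, map_mul, map_zpow, map_mul, map_zpow, Fauto_genA, Fauto_genA,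
                    permHom_genA, permHom_genA, map_mul, map_zpow]
                  apply Multiplicative.toAdd.injective
                  rw [toAdd_mul, toAdd_zpow, hu]
                  simp only [toAdd_ofAdd]
                  rw [zsmul_eq_mul, mul_one]
                  push_cast [ZMod.natCast_val, ZMod.cast_id]
                  ring
            · refine ⟨fun i => if i = i₀ then (genA i₀)⁻¹ else
                  genA i * genA i₀ ^ ((((1 - toAdd (lam (genA i))) * 3).val : ℕ) : ℤ),
                fun i => if i = i₀ then (genA i₀)⁻¹ else
                  genA i * genA i₀ ^ ((((1 - toAdd (lam (genA i))) * 3).val : ℕ) : ℤ), ?_, ?_, ?_⟩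
              · intro i
                beta_reduce
                by_cases hi : i = i₀
                · subst hi
                  rw [if_pos rfl, map_inv, shiftHom_genA]
                  beta_reduce
                  rw [if_pos rfl, inv_inv]
                · rw [if_neg hi, map_mul, map_zpow, shiftHom_genA, shiftHom_genA]
                  beta_reduce
                  rw [if_neg hi, if_pos rfl]
                  group
              · intro i
                beta_reduce
                by_cases hi : i = i₀
                · subst hi
                  rw [if_pos rfl, map_inv, shiftHom_genA]
                  beta_reduce
                  rw [if_pos rfl, inv_inv]
                · rw [if_neg hi, map_mul, map_zpow, shiftHom_genA, shiftHom_genA]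
                  beta_reduce
                  rw [if_neg hi, if_pos rfl]
                  group
              · intro i
                beta_reduce
                by_cases hi : i = i₀
                · subst hi
                  rw [if_pos rfl, map_inv, map_inv, Fauto_genA, permHom_genA, map_inv]
                  apply Multiplicative.toAdd.injective
                  rw [toAdd_inv, hu]
                  decide
                · rw [if_neg hi, map_mul, map_zpow, map_mul, map_zpow, Fauto_genA, Fauto_genA,
                    permHom_genA, permHom_genA, map_mul, map_zpow]
                  apply Multiplicative.toAdd.injective
                  rw [toAdd_mul, toAdd_zpow, hu]
                  simp only [toAdd_ofAdd]
                  rw [zsmul_eq_mul]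
                  push_cast [ZMod.natCast_val, ZMod.cast_id]
                  generalize toAdd (lam (genA i)) = a
                  revert a
                  decide
          · -- case E: impossible, `lam` would land in the even part
            exfalso
            push_neg at hf ha
            have hcomp : prHom.comp lam = 1 := by
              refine hom_ext' ?_ ?_ ?_ ?_ ?_ ?_ ?_
              · intro i
                simp only [MonoidHom.comp_apply, MonoidHom.one_apply]
                exact prHom_even _ (ha i).1 (ha i).2
              · intro j
                exact (Fin.cast hs0 j).elim0
              · intro j
                exact (Fin.cast hs0 j).elim0
              · intro k'
                exact (Fin.cast ht0 k').elim0
              · intro l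
                simp only [MonoidHom.comp_apply, MonoidHom.one_apply]
                exact prHom_two _ (by rw [hE2 l]; rfl)
              · intro l
                simp only [MonoidHom.comp_apply, MonoidHom.one_apply]
                exact prHom_even _ (hf l).1 (hf l).2
              · intro q
                simp only [MonoidHom.comp_apply, MonoidHom.one_apply]
                exact prHom_two _ (by rw [hG2 q]; rfl)
            obtain ⟨g0, hg0⟩ := hsurj (ofAdd (1 : ZMod 4))
            have hc := DFunLike.congr_fun hcomp g0
            rw [MonoidHom.comp_apply, hg0, MonoidHom.one_apply] at hc
            exact prHom_one_ne hc
      · refine hshift (genD ⟨0, ht0⟩) (fun T => shiftHom_genD T _) ?_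
        rw [Fauto_genD, map_zpow, permHom_genD]
        exact hdD _
    · refine hshift (genB ⟨0, hs0⟩) (fun T => shiftHom_genB T _) ?_
      rw [Fauto_genB, map_zpow, permHom_genB]
      exact heB _
  -- assemble the automorphism
  set fd := fFam (r := r) (n := n) e he1 v d hd1 e' he'1 w with hfd
  set Aeq := (shiftEquiv T T' hT1 hT2).trans ((facAuto fd).trans (permAuto gp)) with hAeq
  have happ : ∀ x : OrbGroup r s t m n, Aeq x = permHom gp (facAuto fd (shiftHom T x)) :=
    fun _ => rfl
  have hABj : ∀ j, Aeq (genB j) = genB j ^ e j := fun j => by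
    rw [happ, shiftHom_genB, hfd, Fauto_genB, map_zpow, permHom_genB]
  have hACj : ∀ j, Aeq (genC j) = genB j ^ (v j).val * genC j ^ e j := fun j => by
    rw [happ, shiftHom_genC, hfd, Fauto_genC, map_mul, map_pow, map_zpow, permHom_genB,
      permHom_genC]
  have hADk : ∀ k', Aeq (genD k') = genD k' ^ d k' := fun k' => by
    rw [happ, shiftHom_genD, hfd, Fauto_genD, map_zpow, permHom_genD]
  have hAEl : ∀ l, Aeq (genE l) = genE (gp l) := fun l => by
    rw [happ, shiftHom_genE, hfd, Fauto_genE, genE_zpow_sign l (e' l) (he'1 l), permHom_genE]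
  have hAFl : ∀ l, Aeq (genF l) = genE (gp l) ^ (w l).val * genF (gp l) ^ e' l := fun l => by
    rw [happ, shiftHom_genF, hfd, Fauto_genF, map_mul, map_pow, map_zpow, permHom_genE,
      permHom_genF]
  have hAGq : ∀ q, Aeq (genG q) = genG q := fun q => by
    rw [happ, shiftHom_genG, hfd, Fauto_genG, permHom_genG]
  have hAAi : ∀ i, Aeq (genA i) = permHom gp (facAuto fd (T i)) := fun i => by
    rw [happ, shiftHom_genA]
  refine ⟨Aeq, k, ?_, hk, ?_, ?_, ?_, ?_, ?_, ?_, ?_, ?_⟩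
  · refine ⟨1, 1, gp, 1, fun _ => 1, fun _ => 1, fun _ => 1, fun _ => 1, e, d, e',
      fun _ => 1, fun j => (v j).val, fun l => (w l).val,
      he1, hd1, he'1, fun q => Or.inl rfl, fun j => ZMod.val_lt _, fun l => ZMod.val_lt _,
      fun j => ?_, fun j => ?_, fun k' => ?_, fun l => ?_, fun l => ?_, fun q => ?_⟩
    · rw [hABj j]
      simp
    · rw [hACj j]
      simp
    · rw [hADk k']
      simp
    · rw [hAEl l, genE_zpow_sign (gp l) (e' l) (he'1 l)]
      simp
    · rw [hAFl l]
      simp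
    · rw [hAGq q]
      simp
  · intro i
    rw [hAAi i, hfd]
    exact hTA i
  · intro j
    rw [hABj j]
    exact heB j
  · intro j
    rw [hACj j]
    exact hvB j
  · intro k'
    rw [hADk k']
    exact hdD k'
  · intro l
    rw [hAEl l]
    exact hE2 (gp l)
  · intro i hi
    rw [hAFl i]
    have hh := hF i
    rw [if_pos hi] at hh
    exact hh
  · intro i hi
    rw [hAFl i]
    have hh := hF i
    rw [if_neg (by omega)] at hh
    exact hh
  · intro q
    rw [hAGq q]
    exact hG2 q
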